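/- Let (Ω, 𝒜, μ) be a finite measure space, P a finite index set, and {A_p}_{p∈P} a family of measurable sets. Let (B_1,B*_1),…,(B_k,B*_k) be pairs of subsets of P such that B_i ∩ B*_i = ∅ and ⋂_{p∈B_i} A_p ⊆ ⋃_{p∈B*_i} A_p for every i ∈ {1,…,k}. Then Σ_{I ∈ 𝔅} (−1)^{|I|} μ(⋂_{i∈I} A_i) = 0. -/

import Mathlib

open MeasureTheory Finset

section Aux

variable {P : Type*} [DecidableEq P] {k : ℕ}

/-- membership in `𝔅_i` -/
def memB (B Bstar : Fin k → Finset P) (i : Fin k) (I : Finset P) : Prop :=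
  B i ⊆ I ∧ ∀ j : Fin k, j < i → ¬ B j \ Bstar i ⊆ I

lemma memB_unique {B Bstar : Fin k → Finset P} {I : Finset P} {i i' : Fin k}
    (h : memB B Bstar i I) (h' : memB B Bstar i' I) : i = i' := by
  rcases lt_trichotomy i i' with hlt | he | hlt
  · exact absurd ((Finset.sdiff_subset).trans h.1) (h'.2 i hlt)
  · exact he
  · exact absurd ((Finset.sdiff_subset).trans h'.1) (h.2 i' hlt)

lemma memB_toggle {B Bstar : Fin k → Finset P} {I : Finset P} {i : Fin k} {q : P}
    (hq : q ∈ Bstar i) (hqB : q ∉ B i) (h : memB B Bstar i I) :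
    memB B Bstar i (if q ∈ I then I.erase q else insert q I) := by
  split_ifs with hqI
  · refine ⟨Finset.subset_erase.mpr ⟨h.1, hqB⟩, fun j hj hsub => ?_⟩
    exact h.2 j hj (hsub.trans (Finset.erase_subset _ _))
  · refine ⟨h.1.trans (Finset.subset_insert _ _), fun j hj hsub => ?_⟩
    refine h.2 j hj (fun x hx => ?_)
    rcases Finset.mem_insert.mp (hsub hx) with rfl | hxI
    · exact absurd hq (Finset.mem_sdiff.mp hx).2
    · exact hxI

lemma nonempty_choose_congr {α : Type*} {s t : Finset α} (hs : s.Nonempty)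
    (ht : t.Nonempty) (h : s = t) : hs.choose = ht.choose := by subst h; rfl

/-- the distinguished element of `Bstar i ∩ N` for the unique witness `i`. -/
noncomputable def theQ (B Bstar : Fin k → Finset P) (N I : Finset P)
    (h : ∃ i : Fin k, memB B Bstar i I)
    (hN : ∀ i, B i ⊆ N → (Bstar i ∩ N).Nonempty) (hIN : I ⊆ N) : P :=
  (hN h.choose (h.choose_spec.1.trans hIN)).choose

lemma theQ_spec {B Bstar : Fin k → Finset P} {N I : Finset P}
    (h : ∃ i : Fin k, memB B Bstar i I)
    (hN : ∀ i, B i ⊆ N → (Bstar i ∩ N).Nonempty) (hIN : I ⊆ N)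
    {i : Fin k} (hi : memB B Bstar i I) :
    theQ B Bstar N I h hN hIN ∈ Bstar i ∩ N := by
  have h1 : theQ B Bstar N I h hN hIN ∈ Bstar h.choose ∩ N :=
    (hN h.choose (h.choose_spec.1.trans hIN)).choose_spec
  rwa [memB_unique h.choose_spec hi] at h1

lemma theQ_eq {B Bstar : Fin k → Finset P} {N I I' : Finset P}
    (h : ∃ i : Fin k, memB B Bstar i I) (h' : ∃ i : Fin k, memB B Bstar i I')
    (hN : ∀ i, B i ⊆ N → (Bstar i ∩ N).Nonempty) (hIN : I ⊆ N) (hIN' : I' ⊆ N)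
    {i : Fin k} (hi : memB B Bstar i I) (hi' : memB B Bstar i I') :
    theQ B Bstar N I h hN hIN = theQ B Bstar N I' h' hN hIN' := by
  have e : h.choose = h'.choose :=
    (memB_unique h.choose_spec hi).trans (memB_unique h'.choose_spec hi').symm
  unfold theQ
  exact nonempty_choose_congr _ _ (by rw [e])

lemma toggle_toggle (q : P) (I : Finset P) :
    (if q ∈ (if q ∈ I then I.erase q else insert q I)
      then (if q ∈ I then I.erase q else insert q I).erase q
      else insert q (if q ∈ I then I.erase q else insert q I)) = I := by
  by_cases hqI : q ∈ I <;>
    simp [hqI, Finset.insert_erase, Finset.erase_insert]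

theorem key (B Bstar : Fin k → Finset P)
    (hdisj : ∀ i, Disjoint (B i) (Bstar i)) (N : Finset P)
    (hN : ∀ i, B i ⊆ N → (Bstar i ∩ N).Nonempty)
    [DecidablePred fun I => ∃ i : Fin k, memB B Bstar i I] :
    ∑ I ∈ N.powerset.filter (fun I => ∃ i : Fin k, memB B Bstar i I),
      (-1 : ℝ) ^ I.card = 0 := by
  have hmem : ∀ I ∈ N.powerset.filter (fun I => ∃ i : Fin k, memB B Bstar i I),
      I ⊆ N ∧ ∃ i : Fin k, memB B Bstar i I := fun I hI => by
    have := Finset.mem_filter.mp hI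
    exact ⟨Finset.mem_powerset.mp this.1, this.2⟩
  refine Finset.sum_involution
    (fun I hI =>
      if theQ B Bstar N I (hmem I hI).2 hN (hmem I hI).1 ∈ I
      then I.erase (theQ B Bstar N I (hmem I hI).2 hN (hmem I hI).1)
      else insert (theQ B Bstar N I (hmem I hI).2 hN (hmem I hI).1) I)
    ?_ ?_ ?_ ?_
  · -- cancellation
    intro I hI
    split_ifs with hqI
    · rw [Finset.card_erase_of_mem hqI]
      have hc : I.card - 1 + 1 = I.card :=
        Nat.succ_pred_eq_of_pos (Finset.card_pos.mpr ⟨_, hqI⟩)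
      calc (-1:ℝ) ^ I.card + (-1:ℝ) ^ (I.card - 1)
          = (-1:ℝ) ^ (I.card - 1 + 1) + (-1:ℝ) ^ (I.card - 1) := by rw [hc]
        _ = 0 := by rw [pow_succ]; ring
    · rw [Finset.card_insert_of_notMem hqI, pow_succ]; ring
  · -- g ≠ id
    intro I hI _
    split_ifs with hqI
    · intro hc
      have h1 := Finset.card_erase_of_mem hqI
      have h2 := Finset.card_pos.mpr ⟨_, hqI⟩
      rw [hc] at h1; omega
    · intro hc
      have h1 := Finset.card_insert_of_notMem hqI
      rw [hc] at h1; omega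
  · -- g_mem
    intro I hI
    obtain ⟨hq1, hq2⟩ := Finset.mem_inter.mp
      (theQ_spec (hmem I hI).2 hN (hmem I hI).1 (hmem I hI).2.choose_spec)
    have hqB : theQ B Bstar N I (hmem I hI).2 hN (hmem I hI).1 ∉ B (hmem I hI).2.choose :=
      Finset.disjoint_right.mp (hdisj _) hq1
    have htog := memB_toggle hq1 hqB (hmem I hI).2.choose_spec
    rw [Finset.mem_filter, Finset.mem_powerset]
    refine ⟨?_, ⟨_, htog⟩⟩
    split_ifs with hqI
    · exact (Finset.erase_subset _ _).trans (hmem I hI).1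
    · exact Finset.insert_subset hq2 (hmem I hI).1
  · -- involutive
    intro I hI
    set q := theQ B Bstar N I (hmem I hI).2 hN (hmem I hI).1 with hqdef
    have hi : memB B Bstar (hmem I hI).2.choose I := (hmem I hI).2.choose_spec
    obtain ⟨hq1, hq2⟩ := Finset.mem_inter.mp (theQ_spec (hmem I hI).2 hN (hmem I hI).1 hi)
    have hqB : q ∉ B (hmem I hI).2.choose := Finset.disjoint_right.mp (hdisj _) hq1
    have htog : memB B Bstar (hmem I hI).2.choose (if q ∈ I then I.erase q else insert q I) :=
      memB_toggle hq1 hqB hi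
    have hQeq : ∀ (h' : ∃ j : Fin k, memB B Bstar j (if q ∈ I then I.erase q else insert q I))
        (hIN' : (if q ∈ I then I.erase q else insert q I) ⊆ N),
        theQ B Bstar N (if q ∈ I then I.erase q else insert q I) h' hN hIN' = q :=
      fun h' hIN' => theQ_eq h' (hmem I hI).2 hN hIN' (hmem I hI).1 htog hi
    simp only [← hqdef, hQeq]
    exact toggle_toggle q I

end Aux

/-- the terms indexed by `𝔅 = ⋃ᵢ 𝔅_i` cancel, i.e. their signed sum is `0`. -/
theorem stmt_1 {Ω : Type*} [MeasurableSpace Ω] (μ : Measure Ω) [IsFiniteMeasure μ]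
    {P : Type*} [Fintype P] [DecidableEq P]
    (A : P → Set Ω) (hA : ∀ p, MeasurableSet (A p))
    {k : ℕ} (B Bstar : Fin k → Finset P)
    (hdisj : ∀ i, Disjoint (B i) (Bstar i))
    (hsub : ∀ i, (⋂ p ∈ B i, A p) ⊆ ⋃ p ∈ Bstar i, A p) :
    ∑ I ∈ (Finset.univ : Finset P).powerset.filter
        (fun I => ∃ i : Fin k, B i ⊆ I ∧ ∀ j : Fin k, j < i → ¬ B j \ Bstar i ⊆ I),
      (-1 : ℝ) ^ I.card * (μ (⋂ p ∈ I, A p)).toReal = 0 := by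
  classical
  have hmeas : ∀ I : Finset P, MeasurableSet (⋂ p ∈ I, A p) := fun I =>
    MeasurableSet.biInter (Set.to_countable _) fun p _ => hA p
  have hint : ∀ I : Finset P,
      Integrable (fun ω => (⋂ p ∈ I, A p).indicator (fun _ => (1:ℝ)) ω) μ :=
    fun I => (integrable_const 1).indicator (hmeas I)
  set S := (Finset.univ : Finset P).powerset.filter
      (fun I => ∃ i : Fin k, B i ⊆ I ∧ ∀ j : Fin k, j < i → ¬ B j \ Bstar i ⊆ I) with hSdef
  have step1 : ∀ I ∈ S, (-1 : ℝ) ^ I.card * (μ (⋂ p ∈ I, A p)).toReal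
      = ∫ ω, (-1 : ℝ) ^ I.card * (⋂ p ∈ I, A p).indicator (fun _ => (1:ℝ)) ω ∂μ := by
    intro I _
    rw [integral_const_mul]
    congr 1
    have := integral_indicator_one (μ := μ) (hmeas I)
    exact this.symm
  rw [Finset.sum_congr rfl step1,
    ← integral_finset_sum _ (fun I _ => (hint I).const_mul _)]
  have hzero : ∀ ω : Ω, ∑ I ∈ S,
      (-1 : ℝ) ^ I.card * (⋂ p ∈ I, A p).indicator (fun _ => (1:ℝ)) ω = 0 := by
    intro ω
    set N : Finset P := Finset.univ.filter (fun p => ω ∈ A p) with hNdef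
    have hind : ∀ I : Finset P,
        (⋂ p ∈ I, A p).indicator (fun _ => (1:ℝ)) ω = if I ⊆ N then 1 else 0 := by
      intro I
      have hiff : ω ∈ ⋂ p ∈ I, A p ↔ I ⊆ N := by
        simp [Set.mem_iInter, Finset.subset_iff, hNdef]
      by_cases h : I ⊆ N
      · rw [if_pos h, Set.indicator_of_mem (hiff.mpr h)]
      · rw [if_neg h, Set.indicator_of_notMem (fun hm => h (hiff.mp hm))]
    have hN : ∀ i, B i ⊆ N → (Bstar i ∩ N).Nonempty := by
      intro i hBi
      have hω : ω ∈ ⋂ p ∈ B i, A p := Set.mem_iInter₂.mpr fun p hp => by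
        have := hBi hp; simp [hNdef] at this; exact this
      obtain ⟨q, hq, hωq⟩ := Set.mem_iUnion₂.mp (hsub i hω)
      exact ⟨q, Finset.mem_inter.mpr ⟨hq, by simp [hNdef, hωq]⟩⟩
    calc ∑ I ∈ S, (-1 : ℝ) ^ I.card * (⋂ p ∈ I, A p).indicator (fun _ => (1:ℝ)) ω
        = ∑ I ∈ S, if I ⊆ N then (-1 : ℝ) ^ I.card else 0 := by
          refine Finset.sum_congr rfl fun I _ => ?_
          rw [hind I, mul_ite, mul_one, mul_zero]
      _ = ∑ I ∈ S.filter (fun I => I ⊆ N), (-1 : ℝ) ^ I.card := (Finset.sum_filter _ _).symm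
      _ = ∑ I ∈ N.powerset.filter (fun I => ∃ i : Fin k, memB B Bstar i I),
            (-1 : ℝ) ^ I.card := by
          apply Finset.sum_congr _ (fun _ _ => rfl)
          ext I
          simp only [Finset.mem_filter]
          simp only [hSdef, Finset.mem_filter, Finset.mem_powerset, Finset.subset_univ,
            true_and, memB]
          tauto
      _ = 0 := key B Bstar hdisj N hN
  calc ∫ ω, ∑ I ∈ S, (-1 : ℝ) ^ I.card * (⋂ p ∈ I, A p).indicator (fun _ => (1:ℝ)) ω ∂μ
      = ∫ _, (0:ℝ) ∂μ := by simp_rw [hzero]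
    _ = 0 := integral_zero _ _
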